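/- Let D be a one-dimensional valuation domain, not a DVR, with quotient field K, additive valuation ω : K^× → ℝ, and value group G := ω(K^×) dense in ℝ, and define φ(I) := sup{ω(x) : x ∈ K^×, I ⊆ xD} for nonzero fractional ideals I of D. Then φ restricted to the set of divisorial fractional ideals of D is surjective onto ℝ (for every α ∈ ℝ there exists a divisorial fractional ideal I of D with φ(I) = α), and for a divisorial fractional ideal I of D, φ(I) ∈ G if and only if I is a nonzero principal fractional ideal. -/

import Mathlib

noncomputable section

/-- The `v`-operation `E ↦ (E⁻¹)⁻¹ = (D : (D : E))` on `D`-submodules of `K`. -/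
def vOp (D K : Type*) [CommRing D] [Field K] [Algebra D K] (E : Submodule D K) :
    Submodule D K :=
  (1 : Submodule D K) / ((1 : Submodule D K) / E)

/-- `φ(I) := sup {ω(x) : x ∈ K^×, I ⊆ xD}`. -/
def phiVal (D K : Type*) [CommRing D] [Field K] [Algebra D K] (ω : K → ℝ)
    (I : Submodule D K) : ℝ :=
  sSup {r : ℝ | ∃ x : K, x ≠ 0 ∧ I ≤ Submodule.span D {x} ∧ ω x = r}



section Aux

variable {D K : Type*} [CommRing D] [IsDomain D] [Field K] [Algebra D K] [IsFractionRing D K]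
  (ω : K → ℝ)

/-- The ideal `{y : ω y ≥ β}`. -/
def Jmod (hhom : ∀ x y : K, x ≠ 0 → y ≠ 0 → ω (x * y) = ω x + ω y)
    (hmin : ∀ x y : K, x ≠ 0 → y ≠ 0 → x + y ≠ 0 → min (ω x) (ω y) ≤ ω (x + y))
    (hD : ∀ x : K, (∃ d : D, algebraMap D K d = x) ↔ x = 0 ∨ 0 ≤ ω x)
    (β : ℝ) : Submodule D K where
  carrier := {y | y = 0 ∨ β ≤ ω y}
  zero_mem' := Or.inl rfl
  add_mem' := by
    rintro a b (rfl | ha) (rfl | hb)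
    · simpa using Or.inl rfl
    · simpa using Or.inr hb
    · simpa using Or.inr ha
    · by_cases hab : a + b = 0
      · exact Or.inl hab
      · refine Or.inr ?_
        rcases eq_or_ne a 0 with rfl | ha0
        · simpa using hb
        rcases eq_or_ne b 0 with rfl | hb0
        · simpa using ha
        exact le_trans (le_min ha hb) (hmin a b ha0 hb0 hab)
  smul_mem' := by
    intro d y hy
    rcases hy with rfl | hy
    · left; simp
    rcases eq_or_ne y 0 with rfl | hy0
    · left; simp
    rcases eq_or_ne ((algebraMap D K) d) 0 with hd | hd
    · left; rw [Algebra.smul_def, hd, zero_mul]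
    · right
      rw [Algebra.smul_def, hhom _ _ hd hy0]
      have h0 : 0 ≤ ω ((algebraMap D K) d) := by
        rcases (hD ((algebraMap D K) d)).mp ⟨d, rfl⟩ with h | h
        · exact absurd h hd
        · exact h
      linarith

set_option linter.unusedSectionVars false

variable (hhom : ∀ x y : K, x ≠ 0 → y ≠ 0 → ω (x * y) = ω x + ω y)
    (hmin : ∀ x y : K, x ≠ 0 → y ≠ 0 → x + y ≠ 0 → min (ω x) (ω y) ≤ ω (x + y))
    (hD : ∀ x : K, (∃ d : D, algebraMap D K d = x) ↔ x = 0 ∨ 0 ≤ ω x)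

lemma omega_one (hhom : ∀ x y : K, x ≠ 0 → y ≠ 0 → ω (x * y) = ω x + ω y) :
    ω (1 : K) = 0 := by
  have := hhom 1 1 one_ne_zero one_ne_zero
  simp at this; linarith

lemma omega_inv (hhom : ∀ x y : K, x ≠ 0 → y ≠ 0 → ω (x * y) = ω x + ω y)
    (x : K) (hx : x ≠ 0) : ω x⁻¹ = - ω x := by
  have h := hhom x x⁻¹ hx (inv_ne_zero hx)
  rw [mul_inv_cancel₀ hx, omega_one ω hhom] at h
  linarith

lemma mem_Jmod {β : ℝ} {y : K} : y ∈ Jmod ω hhom hmin hD β ↔ y = 0 ∨ β ≤ ω y := Iff.rfl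

/-- Lemma A: `span {x} = J (ω x)`. -/
lemma span_eq_Jmod (x : K) (hx : x ≠ 0) :
    Submodule.span D {x} = Jmod ω hhom hmin hD (ω x) := by
  apply le_antisymm
  · rw [Submodule.span_le]
    rintro y rfl
    exact Or.inr le_rfl
  · rintro y (rfl | hy)
    · exact Submodule.zero_mem _
    · rcases eq_or_ne y 0 with rfl | hy0
      · exact Submodule.zero_mem _
      have hw : 0 ≤ ω (y * x⁻¹) := by
        rw [hhom y x⁻¹ hy0 (inv_ne_zero hx), omega_inv ω hhom x hx]; linarith
      obtain ⟨d, hd⟩ := (hD (y * x⁻¹)).mpr (Or.inr hw)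
      rw [Submodule.mem_span_singleton]
      exact ⟨d, by rw [Algebra.smul_def, hd, mul_assoc, inv_mul_cancel₀ hx, mul_one]⟩

/-- The value set of a submodule. -/
def valSet (I : Submodule D K) : Set ℝ := {r | ∃ y ∈ I, y ≠ 0 ∧ ω y = r}

/-- Lemma B: `1/I = J(-sInf (valSet I))`. -/
lemma one_div_eq_Jmod (I : Submodule D K) (hne : I ≠ ⊥) (hbdd : BddBelow (valSet ω I)) :
    (1 : Submodule D K) / I = Jmod ω hhom hmin hD (-(sInf (valSet ω I))) := by
  obtain ⟨y₀, hy₀I, hy₀⟩ := Submodule.exists_mem_ne_zero_of_ne_bot hne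
  have hSne : (valSet ω I).Nonempty := ⟨ω y₀, y₀, hy₀I, hy₀, rfl⟩
  ext z
  rw [Submodule.mem_div_iff_forall_mul_mem, mem_Jmod]
  constructor
  · intro h
    rcases eq_or_ne z 0 with rfl | hz0
    · exact Or.inl rfl
    refine Or.inr ?_
    have hlb : ∀ r ∈ valSet ω I, -(ω z) ≤ r := by
      rintro r ⟨y, hyI, hy0, rfl⟩
      have h1 : ∃ d : D, algebraMap D K d = z * y := Submodule.mem_one.mp (h y hyI)
      rcases (hD (z * y)).mp h1 with h' | h'
      · exact absurd h' (mul_ne_zero hz0 hy0)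
      · rw [hhom z y hz0 hy0] at h'; linarith
    linarith [le_csInf hSne hlb]
  · intro hz y hyI
    rcases eq_or_ne z 0 with rfl | hz0
    · simpa using Submodule.zero_mem _
    rcases eq_or_ne y 0 with rfl | hy0
    · simpa using Submodule.zero_mem _
    have hz' : -(sInf (valSet ω I)) ≤ ω z := hz.resolve_left hz0
    refine Submodule.mem_one.mpr ((hD (z * y)).mpr (Or.inr ?_))
    have : sInf (valSet ω I) ≤ ω y := csInf_le hbdd ⟨y, hyI, hy0, rfl⟩
    rw [hhom z y hz0 hy0]
    linarith

end Aux

section Aux2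

set_option linter.unusedSectionVars false

variable {D K : Type*} [CommRing D] [IsDomain D] [Field K] [Algebra D K] [IsFractionRing D K]
  (ω : K → ℝ)
  (hhom : ∀ x y : K, x ≠ 0 → y ≠ 0 → ω (x * y) = ω x + ω y)
  (hmin : ∀ x y : K, x ≠ 0 → y ≠ 0 → x + y ≠ 0 → min (ω x) (ω y) ≤ ω (x + y))
  (hD : ∀ x : K, (∃ d : D, algebraMap D K d = x) ↔ x = 0 ∨ 0 ≤ ω x)
  (hdense : ∀ a b : ℝ, a < b → ∃ x : K, x ≠ 0 ∧ a < ω x ∧ ω x < b)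

lemma bddBelow_valSet_Jmod (β : ℝ) : BddBelow (valSet ω (Jmod ω hhom hmin hD β)) := by
  refine ⟨β, ?_⟩
  rintro r ⟨y, hyJ, hy0, rfl⟩
  exact (mem_Jmod ω hhom hmin hD |>.mp hyJ).resolve_left hy0

include hdense

lemma Jmod_ne_bot (β : ℝ) : Jmod ω hhom hmin hD β ≠ ⊥ := by
  obtain ⟨x, hx0, hx1, _⟩ := hdense β (β + 1) (by linarith)
  intro h
  have : x ∈ Jmod ω hhom hmin hD β := Or.inr (le_of_lt hx1)
  rw [h, Submodule.mem_bot] at this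
  exact hx0 this

lemma sInf_valSet_Jmod (β : ℝ) : sInf (valSet ω (Jmod ω hhom hmin hD β)) = β := by
  have hbdd := bddBelow_valSet_Jmod ω hhom hmin hD β
  obtain ⟨x, hx0, hx1, hx2⟩ := hdense β (β + 1) (by linarith)
  have hne : (valSet ω (Jmod ω hhom hmin hD β)).Nonempty :=
    ⟨ω x, x, Or.inr (le_of_lt hx1), hx0, rfl⟩
  apply le_antisymm
  · by_contra h
    push_neg at h
    obtain ⟨y, hy0, hy1, hy2⟩ := hdense β _ h
    have : sInf (valSet ω (Jmod ω hhom hmin hD β)) ≤ ω y :=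
      csInf_le hbdd ⟨y, Or.inr (le_of_lt hy1), hy0, rfl⟩
    linarith
  · refine le_csInf hne ?_
    rintro r ⟨y, hyJ, hy0, rfl⟩
    exact (mem_Jmod ω hhom hmin hD |>.mp hyJ).resolve_left hy0

lemma Jmod_fractional (β : ℝ) : IsFractional (nonZeroDivisors D) (Jmod ω hhom hmin hD β) := by
  obtain ⟨x, hx0, hx1, hx2⟩ := hdense (max 0 (-β)) (max 0 (-β) + 1) (by linarith)
  have hx0' : 0 ≤ ω x := le_trans (le_max_left _ _) (le_of_lt hx1)
  obtain ⟨d, hd⟩ := (hD x).mpr (Or.inr hx0')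
  have hd0 : d ≠ 0 := by
    rintro rfl
    rw [map_zero] at hd
    exact hx0 hd.symm
  refine ⟨d, mem_nonZeroDivisors_of_ne_zero hd0, ?_⟩
  intro b hb
  rcases (mem_Jmod ω hhom hmin hD |>.mp hb) with rfl | hbω
  · rw [smul_zero]; exact ⟨0, by simp⟩
  rcases eq_or_ne b 0 with rfl | hb0
  · rw [smul_zero]; exact ⟨0, by simp⟩
  have : 0 ≤ ω (x * b) := by
    rw [hhom x b hx0 hb0]
    have : -β < ω x := lt_of_le_of_lt (le_max_right _ _) hx1
    linarith
  obtain ⟨d', hd'⟩ := (hD (x * b)).mpr (Or.inr this)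
  exact ⟨d', by rw [hd', Algebra.smul_def, hd]⟩

lemma vOp_Jmod (β : ℝ) : vOp D K (Jmod ω hhom hmin hD β) = Jmod ω hhom hmin hD β := by
  have h1 : ∀ γ : ℝ, (1 : Submodule D K) / (Jmod ω hhom hmin hD γ) =
      Jmod ω hhom hmin hD (-γ) := by
    intro γ
    rw [one_div_eq_Jmod ω hhom hmin hD _ (Jmod_ne_bot ω hhom hmin hD hdense γ)
      (bddBelow_valSet_Jmod ω hhom hmin hD γ), sInf_valSet_Jmod ω hhom hmin hD hdense γ]
  rw [vOp, h1, h1, neg_neg]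

lemma phi_Jmod (β : ℝ) : phiVal D K ω (Jmod ω hhom hmin hD β) = β := by
  have hle : ∀ x : K, x ≠ 0 → (Jmod ω hhom hmin hD β ≤ Submodule.span D {x} ↔ ω x ≤ β) := by
    intro x hx
    rw [span_eq_Jmod ω hhom hmin hD x hx]
    constructor
    · intro h
      by_contra hc
      push_neg at hc
      obtain ⟨y, hy0, hy1, hy2⟩ := hdense β _ hc
      have := (h (Or.inr (le_of_lt hy1) : y ∈ Jmod ω hhom hmin hD β)).resolve_left hy0
      linarith
    · rintro h y (rfl | hy)
      · exact Or.inl rfl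
      · exact Or.inr (le_trans h hy)
  set T := {r : ℝ | ∃ x : K, x ≠ 0 ∧ Jmod ω hhom hmin hD β ≤ Submodule.span D {x} ∧ ω x = r}
    with hT
  have hub : ∀ r ∈ T, r ≤ β := by
    rintro r ⟨x, hx0, hx1, rfl⟩
    exact (hle x hx0).mp hx1
  obtain ⟨x, hx0, hx1, hx2⟩ := hdense (β - 1) β (by linarith)
  have hne : T.Nonempty := ⟨ω x, x, hx0, (hle x hx0).mpr (le_of_lt hx2), rfl⟩
  rw [phiVal]
  apply le_antisymm (csSup_le hne hub)
  by_contra h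
  push_neg at h
  obtain ⟨y, hy0, hy1, hy2⟩ := hdense _ β h
  have : ω y ≤ sSup T := le_csSup ⟨β, hub⟩ ⟨y, hy0, (hle y hy0).mpr (le_of_lt hy2), rfl⟩
  linarith

end Aux2

/-- **Lemmas 2.10 and 2.11.** Let `D` be a one-dimensional valuation domain, not a DVR, with
quotient field `K`, valuation `ω : K^× → ℝ` and value group `G = ω(K^×)` dense in `ℝ`.  Then
`φ`, restricted to divisorial fractional ideals, is surjective onto `ℝ`; and for a divisorial
fractional ideal `I`, `φ(I) ∈ G` if and only if `I` is a nonzero principal fractional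
ideal. -/
theorem phiVal_surjective_and_phiVal_mem_valueGroup_iff_principal
    (D K : Type*) [CommRing D] [IsDomain D] [Field K] [Algebra D K] [IsFractionRing D K]
    (ω : K → ℝ)
    (hhom : ∀ x y : K, x ≠ 0 → y ≠ 0 → ω (x * y) = ω x + ω y)
    (hmin : ∀ x y : K, x ≠ 0 → y ≠ 0 → x + y ≠ 0 → min (ω x) (ω y) ≤ ω (x + y))
    -- `D = {x ∈ K : x = 0 ∨ ω(x) ≥ 0}`:
    (hD : ∀ x : K, (∃ d : D, algebraMap D K d = x) ↔ x = 0 ∨ 0 ≤ ω x)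
    -- `D` is not a DVR, i.e. the value group `G = ω(K^×)` is dense in `ℝ`:
    (hnotdvr : ¬ IsDiscreteValuationRing D)
    (hdense : ∀ a b : ℝ, a < b → ∃ x : K, x ≠ 0 ∧ a < ω x ∧ ω x < b) :
    -- `φ` is surjective from the divisorial fractional ideals onto `ℝ` …
    (∀ α : ℝ, ∃ I : Submodule D K, I ≠ ⊥ ∧ IsFractional (nonZeroDivisors D) I ∧
      vOp D K I = I ∧ phiVal D K ω I = α) ∧
    -- … and `φ(I) ∈ G = ω(K^×)` iff `I` is a nonzero principal fractional ideal:
    (∀ I : Submodule D K, I ≠ ⊥ → IsFractional (nonZeroDivisors D) I → vOp D K I = I →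
      ((∃ x : K, x ≠ 0 ∧ ω x = phiVal D K ω I) ↔
        ∃ x : K, x ≠ 0 ∧ I = Submodule.span D {x})) := by
  set J := Jmod ω hhom hmin hD with hJ
  constructor
  · intro α
    exact ⟨J α, Jmod_ne_bot ω hhom hmin hD hdense α,
      Jmod_fractional ω hhom hmin hD hdense α,
      vOp_Jmod ω hhom hmin hD hdense α,
      phi_Jmod ω hhom hmin hD hdense α⟩
  · intro I hne hfr hv
    -- `valSet ω I` is bounded below since `I` is fractional
    obtain ⟨a, haS, ha⟩ := hfr
    have ha0 : (algebraMap D K) a ≠ 0 := by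
      intro h
      have : a = 0 := IsFractionRing.injective D K (by simpa using h)
      exact (nonZeroDivisors.ne_zero haS) this
    have hbdd : BddBelow (valSet ω I) := by
      refine ⟨-(ω ((algebraMap D K) a)), ?_⟩
      rintro r ⟨y, hyI, hy0, rfl⟩
      obtain ⟨d, hd⟩ := ha y hyI
      rw [Algebra.smul_def] at hd
      rcases (hD ((algebraMap D K) a * y)).mp ⟨d, hd⟩ with h' | h'
      · exact absurd h' (mul_ne_zero ha0 hy0)
      · rw [hhom _ _ ha0 hy0] at h'
        linarith
    set β := sInf (valSet ω I) with hβ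
    -- `I` is divisorial, hence `I = J β`
    have hIJ : I = J β := by
      conv_lhs => rw [← hv]
      rw [vOp, one_div_eq_Jmod ω hhom hmin hD I hne hbdd,
        one_div_eq_Jmod ω hhom hmin hD _ (Jmod_ne_bot ω hhom hmin hD hdense (-β))
          (bddBelow_valSet_Jmod ω hhom hmin hD (-β)),
        sInf_valSet_Jmod ω hhom hmin hD hdense (-β), neg_neg]
    have hphi : phiVal D K ω I = β := by
      rw [hIJ]; exact phi_Jmod ω hhom hmin hD hdense β
    constructor
    · rintro ⟨x, hx0, hx⟩
      refine ⟨x, hx0, ?_⟩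
      rw [hIJ, span_eq_Jmod ω hhom hmin hD x hx0, hx, hphi, hJ]
    · rintro ⟨x, hx0, hx⟩
      refine ⟨x, hx0, ?_⟩
      rw [hx, span_eq_Jmod ω hhom hmin hD x hx0, phi_Jmod ω hhom hmin hD hdense (ω x)]
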